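/- Let f be a violation-free DMAC instance with unit displacements on G = G1 × G2, and let x, x̃ ∈ G1 with x ≤ x̃. If y* is the pointwise-least fixed point of the sub-instance f^x and ỹ* is the pointwise-least fixed point of f^{x̃}, then y* ≤ ỹ* and ‖ỹ* − y*‖∞ ≤ ‖x̃ − x‖∞. -/

import Mathlib

/-- Membership in the grid `{1, …, n}^d ⊆ ℤ^d`. -/
def inGrid (n : ℕ) {d : ℕ} (x : Fin d → ℤ) : Prop :=
  ∀ i, 1 ≤ x i ∧ x i ≤ (n : ℤ)

/-- The ℓ∞ distance `‖x − y‖∞ = max_i |x_i − y_i|` (as a natural number). -/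
def linf {d : ℕ} (x y : Fin d → ℤ) : ℕ :=
  Finset.univ.sup fun i => (x i - y i).natAbs

/-- Membership in the product grid `G1 × G2`. -/
def inGridP (n : ℕ) {d1 d2 : ℕ} (u : (Fin d1 → ℤ) × (Fin d2 → ℤ)) : Prop :=
  inGrid n u.1 ∧ inGrid n u.2

/-- The ℓ∞ distance on the product grid. -/
def linfP {d1 d2 : ℕ} (u v : (Fin d1 → ℤ) × (Fin d2 → ℤ)) : ℕ :=
  max (linf u.1 v.1) (linf u.2 v.2)

lemma descend {d n : ℕ} (g : (Fin d → ℤ) → (Fin d → ℤ))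
    (hg : ∀ z, inGrid n z → inGrid n (g z))
    (hm : ∀ z w, inGrid n z → inGrid n w → z ≤ w → g z ≤ g w)
    (w : Fin d → ℤ) (hw : inGrid n w) (hpre : g w ≤ w) :
    ∃ z, inGrid n z ∧ g z = z ∧ z ≤ w := by
  set seq : ℕ → (Fin d → ℤ) := fun m => g^[m] w with hseq
  have hstep : ∀ m, seq (m+1) = g (seq m) := fun m => Function.iterate_succ_apply' g m w
  have hgrid : ∀ m, inGrid n (seq m) := by
    intro m; induction m with
    | zero => exact hw
    | succ m ih => rw [hstep]; exact hg _ ih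
  have hdec : ∀ m, seq (m+1) ≤ seq m := by
    intro m; induction m with
    | zero => rw [hstep]; exact hpre
    | succ m ih =>
      have h2 := hm _ _ (hgrid (m+1)) (hgrid m) ih
      rw [← hstep m, ← hstep (m+1)] at h2
      exact h2
  have hlew : ∀ m, seq m ≤ w := by
    intro m; induction m with
    | zero => exact le_refl _
    | succ m ih => exact le_trans (hdec m) ih
  have key : ∃ m, seq (m+1) = seq m := by
    by_contra hc
    push_neg at hc
    set S : ℕ → ℕ := fun m => ∑ i, (seq m i - 1).toNat with hS
    have hSdec : ∀ m, S (m+1) < S m := by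
      intro m
      have hne : seq (m+1) ≠ seq m := hc m
      obtain ⟨j, hj⟩ : ∃ j, seq (m+1) j < seq m j := by
        by_contra h
        push_neg at h
        exact hne (le_antisymm (hdec m) (fun i => h i))
      refine Finset.sum_lt_sum (fun i _ => ?_) ⟨j, Finset.mem_univ j, ?_⟩
      · exact Int.toNat_le_toNat (by linarith [hdec m i])
      · have h1 : 1 ≤ seq (m+1) j := (hgrid (m+1) j).1
        have : (0:ℤ) < seq m j - 1 := by linarith
        rw [Int.toNat_lt_toNat this]
        linarith
    have hbd : ∀ m, S m + m ≤ S 0 := by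
      intro m; induction m with
      | zero => simp
      | succ m ih => have := hSdec m; omega
    have := hbd (S 0 + 1); omega
  obtain ⟨m, hm'⟩ := key
  exact ⟨seq m, hgrid m, by rw [← hstep]; exact hm', hlew m⟩

lemma linf_le_iff {d : ℕ} (x y : Fin d → ℤ) (k : ℕ) :
    linf x y ≤ k ↔ ∀ i, (x i - y i).natAbs ≤ k := by
  simp [linf, Finset.sup_le_iff]

/-- For `x ≤ x̃`, the least fixed points `y*` of `f^x` and `ỹ*` of `f^x̃`
satisfy `y* ≤ ỹ*` and `‖ỹ* − y*‖∞ ≤ ‖x̃ − x‖∞`. -/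
theorem subslice_lfp_monotone (d1 d2 n : ℕ) (hn : 1 ≤ n)
    (f : (Fin d1 → ℤ) × (Fin d2 → ℤ) → (Fin d1 → ℤ) × (Fin d2 → ℤ))
    (hrange : ∀ u, inGridP n u → inGridP n (f u))
    (hmono : ∀ u v, inGridP n u → inGridP n v → u ≤ v → f u ≤ f v)
    (hnonexp : ∀ u v, inGridP n u → inGridP n v → linfP (f u) (f v) ≤ linfP u v)
    (hunit : ∀ u, inGridP n u → linfP (f u) u ≤ 1)
    (x xt : Fin d1 → ℤ) (hx : inGrid n x) (hxt : inGrid n xt)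
    (hle : x ≤ xt)
    (ys yts : Fin d2 → ℤ)
    -- `ys` is the least fixed point of `f^x`
    (hysG : inGrid n ys) (hysfix : (f (x, ys)).2 = ys)
    (hysleast : ∀ z, inGrid n z → (f (x, z)).2 = z → ys ≤ z)
    -- `yts` is the least fixed point of `f^x̃`
    (hytsG : inGrid n yts) (hytsfix : (f (xt, yts)).2 = yts)
    (hytsleast : ∀ z, inGrid n z → (f (xt, z)).2 = z → yts ≤ z) :
    ys ≤ yts ∧ linf yts ys ≤ linf xt x := by
  -- Part 1: ys ≤ yts
  have hgx : ∀ z, inGrid n z → inGrid n ((f (x, z)).2) :=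
    fun z hz => (hrange (x, z) ⟨hx, hz⟩).2
  have hgxm : ∀ z w, inGrid n z → inGrid n w → z ≤ w →
      (f (x, z)).2 ≤ (f (x, w)).2 := by
    intro z w hz hw hzw
    exact (hmono (x, z) (x, w) ⟨hx, hz⟩ ⟨hx, hw⟩ ⟨le_refl x, hzw⟩).2
  have hpre1 : (f (x, yts)).2 ≤ yts := by
    have h := (hmono (x, yts) (xt, yts) ⟨hx, hytsG⟩ ⟨hxt, hytsG⟩ ⟨hle, le_refl yts⟩).2
    rw [hytsfix] at h
    exact h
  obtain ⟨z, hzG, hzfix, hzle⟩ := descend (n := n) (fun z => (f (x, z)).2)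
    hgx hgxm yts hytsG hpre1
  have h1 : ys ≤ yts := le_trans (hysleast z hzG hzfix) hzle
  refine ⟨h1, ?_⟩
  -- Part 2: linf yts ys ≤ linf xt x
  obtain ⟨k, hk⟩ : ∃ k : ℕ, k = linf xt x := ⟨_, rfl⟩
  rw [← hk]
  obtain ⟨w, hwdef⟩ : ∃ w : Fin d2 → ℤ, ∀ i, w i = min (yts i) (ys i + (k:ℤ)) :=
    ⟨_, fun i => rfl⟩
  have hwys : ys ≤ w := fun i => by rw [hwdef]; exact le_min (h1 i) (by simp)
  have hwyts : w ≤ yts := fun i => by rw [hwdef]; exact min_le_left _ _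
  have hwG : inGrid n w := fun i =>
    ⟨le_trans (hysG i).1 (hwys i), le_trans (hwyts i) (hytsG i).2⟩
  have hgxt : ∀ z, inGrid n z → inGrid n ((f (xt, z)).2) :=
    fun z hz => (hrange (xt, z) ⟨hxt, hz⟩).2
  have hgxtm : ∀ z w', inGrid n z → inGrid n w' → z ≤ w' →
      (f (xt, z)).2 ≤ (f (xt, w')).2 := by
    intro z w' hz hw' hzw
    exact (hmono (xt, z) (xt, w') ⟨hxt, hz⟩ ⟨hxt, hw'⟩ ⟨le_refl xt, hzw⟩).2
  have hlinf_w_ys : linf w ys ≤ k := by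
    rw [linf_le_iff]
    intro i
    have h1' : ys i ≤ w i := hwys i
    have h2' : w i ≤ ys i + k := by rw [hwdef]; exact min_le_right _ _
    omega
  have hne : linf ((f (xt, w)).2) ((f (x, ys)).2) ≤ k := by
    have h := hnonexp (xt, w) (x, ys) ⟨hxt, hwG⟩ ⟨hx, hysG⟩
    have hR : linfP (xt, w) (x, ys) ≤ k := by
      simp only [linfP]
      exact max_le (le_of_eq hk.symm) hlinf_w_ys
    have hL : linf ((f (xt, w)).2) ((f (x, ys)).2) ≤ linfP (f (xt, w)) (f (x, ys)) :=
      le_max_right _ _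
    omega
  rw [hysfix] at hne
  have hpre2 : (f (xt, w)).2 ≤ w := by
    have hA : (f (xt, w)).2 ≤ yts := by
      have hA' := hgxtm w yts hwG hytsG hwyts
      rw [hytsfix] at hA'
      exact hA'
    intro i
    have hB : ((f (xt, w)).2 i - ys i).natAbs ≤ k := (linf_le_iff _ _ _).1 hne i
    have hAi := hA i
    rw [hwdef]
    refine le_min hAi ?_
    have hB' : (f (xt, w)).2 i - ys i ≤ (k:ℤ) := by omega
    linarith
  obtain ⟨z2, hz2G, hz2fix, hz2le⟩ := descend (n := n) (fun z => (f (xt, z)).2)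
    hgxt hgxtm w hwG hpre2
  have hyts_le : yts ≤ w := le_trans (hytsleast z2 hz2G hz2fix) hz2le
  rw [linf_le_iff]
  intro i
  have ha : yts i ≤ ys i + k := by
    have := hyts_le i
    rw [hwdef] at this
    exact le_trans this (min_le_right _ _)
  have hb : ys i ≤ yts i := h1 i
  omega
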